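/- Let T', T'' be two binary trees that both resolve a multifurcated tree T, and let v be a multifurcated node of T with children u_1,...,u_p. Let B', B'' be the subtrees of T', T'' whose edge contractions restore the multifurcation at v. Then under any fixed leaf ordering σ with OLA node indexing, the internal nodes of B' and B'' receive the same set of indices, namely S = {-s_i : 1 ≤ i ≤ p and there exists j with s_j < s_i}, where s_i is the minimum leaf index in the subtree below u_i. -/

import Mathlib

open scoped Classical

namespace OLA

/-- Rooted binary phylogenetic trees with `ℕ`-labeled leaves. -/
inductive BTree where
  | leaf (x : ℕ)
  | node (l r : BTree)
deriving DecidableEq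

namespace BTree

def leafList : BTree → List ℕ
  | .leaf x => [x]
  | .node l r => leafList l ++ leafList r

def leafSet (t : BTree) : Finset ℕ := t.leafList.toFinset

/-- `t` is a phylogenetic tree on the leaf set `{0, …, n-1}`. -/
def IsPhylo (t : BTree) (n : ℕ) : Prop :=
  t.leafList.Nodup ∧ t.leafSet = Finset.range n

def minLeaf : BTree → ℕ
  | .leaf x => x
  | .node l r => min (minLeaf l) (minLeaf r)

/-- OLA index of the root of a (sub)tree: leaf label, or minus the second
smallest of the minimal leaves of the two children. -/
def idx : BTree → ℤ
  | .leaf x => (x : ℤ)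
  | .node l r => -(max (minLeaf l) (minLeaf r) : ℤ)

/-- Restriction `T^i` of `t` to the leaves labeled `≤ i` (suppressing
degree-2 nodes); `none` if no such leaf exists. -/
def restrictLe : BTree → ℕ → Option BTree
  | .leaf x, i => if x ≤ i then some (.leaf x) else none
  | .node l r, i =>
    match restrictLe l i, restrictLe r i with
    | some l', some r' => some (.node l' r')
    | some l', none => some l'
    | none, some r' => some r'
    | none, none => none

/-- Restriction `T|_S` of `t` to the leaves in `S` (suppressing degree-2 nodes). -/
def restrictTo : BTree → Finset ℕ → Option BTree
  | .leaf x, S => if x ∈ S then some (.leaf x) else none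
  | .node l r, S =>
    match restrictTo l S, restrictTo r S with
    | some l', some r' => some (.node l' r')
    | some l', none => some l'
    | none, some r' => some r'
    | none, none => none

/-- OLA index of the sibling of the leaf labeled `i`, if it exists. -/
def siblingIdx : BTree → ℕ → Option ℤ
  | .leaf _, _ => none
  | .node l r, i =>
    if l = .leaf i then some r.idx
    else if r = .leaf i then some l.idx
    else (siblingIdx l i).orElse (fun _ => siblingIdx r i)

/-- The OLA vector entry of `t` at position `i ≥ 1`: the index of the sibling
of leaf `i` in the restriction of `t` to leaves `0, …, i`. -/
def olaEntry (t : BTree) (i : ℕ) : ℤ :=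
  ((t.restrictLe i).bind (fun t' => t'.siblingIdx i)).getD 0

def relabel (f : ℕ → ℕ) : BTree → BTree
  | .leaf x => .leaf (f x)
  | .node l r => .node (relabel f l) (relabel f r)

/-- The set of clusters (leaf sets of rooted subtrees) of `t`.  Two leaf-labeled
trees over the same leaf set are isomorphic iff their cluster sets coincide. -/
def clusters : BTree → Set (Set ℕ)
  | .leaf x => {{x}}
  | .node l r => insert {y | y ∈ (node l r).leafList} (clusters l ∪ clusters r)

def subtreeAt : BTree → List Bool → Option BTree
  | t, [] => some t
  | .leaf _, _ :: _ => none
  | .node l _, false :: p => subtreeAt l p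
  | .node _ r, true :: p => subtreeAt r p

/-- `w` occurs as a rooted subtree (i.e. the subtree below a node) of `t`. -/
def IsNode (t w : BTree) : Prop := ∃ p, t.subtreeAt p = some w

/-- The position of the least common ancestor of the leaves in `S`. -/
def lcaPos : BTree → Finset ℕ → List Bool
  | .leaf _, _ => []
  | .node l r, S =>
    if S ⊆ l.leafSet then false :: lcaPos l S
    else if S ⊆ r.leafSet then true :: lcaPos r S
    else []

/-- Positions of the nodes of the minimal spanning subtree `T(S)`. -/
def spanNodes (t : BTree) (S : Finset ℕ) : Set (List Bool) :=
  {p | t.lcaPos S <+: p ∧ ∃ u, t.subtreeAt p = some u ∧ ∃ x ∈ S, x ∈ u.leafList}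

end BTree

/-- OLA vector of tree `t` under the leaf ordering `σ` (leaf `x` is the
`σ x`-th leaf in the order). -/
def ola (t : BTree) (σ : Equiv.Perm ℕ) (i : ℕ) : ℤ :=
  (t.relabel σ).olaEntry i

/-- `σ` is a valid leaf ordering of the leaf set `{0, …, n-1}`. -/
def IsOrdering (σ : Equiv.Perm ℕ) (n : ℕ) : Prop := ∀ x < n, σ x < n

/-- The set of (corrected) mismatched indices among `{1, …, i}` of a family of
OLA vectors: an index is mismatched if two of the vectors differ there, or if
all vectors place that leaf above the internal node created by an
already-mismatched leaf. -/
noncomputable def mismatch {ι : Type*} (v : ι → ℕ → ℤ) : ℕ → Finset ℕ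
  | 0 => ∅
  | i + 1 =>
    let M := mismatch v i
    if (∃ a b : ι, v a (i+1) ≠ v b (i+1)) ∨ (∃ j ∈ M, ∀ a : ι, v a (i+1) = -(j : ℤ))
    then insert (i+1) M else M

/-- Corrected OLA distance of a family of OLA vectors of trees on `n` leaves. -/
noncomputable def corrDist {ι : Type*} (v : ι → ℕ → ℤ) (n : ℕ) : ℕ :=
  (mismatch v (n-1)).card

/-- Hamming OLA distance: the number of indices where at least two vectors differ. -/
noncomputable def hamDist {ι : Type*} (v : ι → ℕ → ℤ) (n : ℕ) : ℕ :=
  ((Finset.Icc 1 (n-1)).filter fun i => ∃ a b : ι, v a i ≠ v b i).card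

/-- `comp` is an agreement forest for the trees `ts` over leaf set `{0,…,n-1}`:
components have pairwise disjoint leaf sets partitioning the full leaf set,
each tree restricted to a component's leaves is isomorphic to the component,
and the spanning subtrees are node-disjoint in each tree. -/
def IsAF {ι : Type*} (ts : ι → BTree) (n : ℕ) {f : ℕ} (comp : Fin f → BTree) : Prop :=
  (∀ i, (comp i).leafList.Nodup) ∧
  (∀ i j, i ≠ j → Disjoint (comp i).leafSet (comp j).leafSet) ∧
  (Finset.univ.biUnion (fun i => (comp i).leafSet) = Finset.range n) ∧
  (∀ a i, ∃ c, (ts a).restrictTo (comp i).leafSet = some c ∧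
      c.clusters = (comp i).clusters) ∧
  (∀ a i j, i ≠ j →
      Disjoint (BTree.spanNodes (ts a) ((comp i).leafSet))
               (BTree.spanNodes (ts a) ((comp j).leafSet)))

/-- Edge of the inheritance graph: some tree has a directed path from the root
of the spanning subtree of component `i` down to that of component `j`. -/
def inhEdge {ι : Type*} (ts : ι → BTree) {f : ℕ} (comp : Fin f → BTree)
    (i j : Fin f) : Prop :=
  i ≠ j ∧ ∃ a, (BTree.lcaPos (ts a) ((comp i).leafSet)) <+:
      (BTree.lcaPos (ts a) ((comp j).leafSet))

/-- `comp` is an acyclic agreement forest for `ts`. -/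
def IsAAF {ι : Type*} (ts : ι → BTree) (n : ℕ) {f : ℕ} (comp : Fin f → BTree) : Prop :=
  IsAF ts n comp ∧ ∀ i, ¬ Relation.TransGen (inhEdge ts comp) i i

/-- Size of a maximum acyclic agreement forest (an AAF with fewest components). -/
noncomputable def maafSize {ι : Type*} (ts : ι → BTree) (n : ℕ) : ℕ :=
  sInf {f | ∃ comp : Fin f → BTree, IsAAF ts n comp}

end OLA
namespace OLA

/-- Multifurcated (not necessarily binary) rooted trees with `ℕ`-labeled leaves. -/
inductive MTree where
  | leaf (x : ℕ)
  | node (cs : List MTree)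

namespace MTree

def leafList : MTree → List ℕ
  | .leaf x => [x]
  | .node cs => cs.attach.flatMap (fun c => leafList c.1)
decreasing_by have := List.sizeOf_lt_of_mem c.2; simp_wf; omega

def leafSet (t : MTree) : Finset ℕ := t.leafList.toFinset

def minLeaf (t : MTree) : ℕ := t.leafList.min?.getD 0

def IsPhyloM (t : MTree) (n : ℕ) : Prop :=
  t.leafList.Nodup ∧ t.leafSet = Finset.range n

def clusters : MTree → Set (Set ℕ)
  | .leaf x => {{x}}
  | .node cs =>
      insert {y | y ∈ (MTree.node cs).leafList}
        ((cs.attach.map (fun c => clusters c.1)).foldr (· ∪ ·) ∅)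
decreasing_by have := List.sizeOf_lt_of_mem c.2; simp_wf; omega

def childrenOrSelf : MTree → List MTree
  | .leaf x => [.leaf x]
  | .node cs => cs

def relabelM (f : ℕ → ℕ) : MTree → MTree
  | .leaf x => .leaf (f x)
  | .node cs => .node (cs.attach.map fun c => relabelM f c.1)
decreasing_by have := List.sizeOf_lt_of_mem c.2; simp_wf; omega

/-- `s` occurs as a rooted subtree of `t`. -/
inductive Subtree : MTree → MTree → Prop
  | refl (t : MTree) : Subtree t t
  | child {s c : MTree} {cs : List MTree} : c ∈ cs → Subtree s c → Subtree s (.node cs)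

/-- Restriction of `t` to leaves labeled `≤ i`, suppressing degree-2 nodes. -/
def restrictLe : MTree → ℕ → Option MTree
  | .leaf x, i => if x ≤ i then some (.leaf x) else none
  | .node cs, i =>
    match cs.attach.filterMap (fun c => restrictLe c.1 i) with
    | [] => none
    | [c] => some c
    | cs' => some (.node cs')
decreasing_by have := List.sizeOf_lt_of_mem c.2; simp_wf; omega

end MTree

/-- Contract, in the binary tree `t`, the edges above the (internal) nodes at the
positions selected by `sel`; the result is a multifurcated tree. -/
def BTree.contract : BTree → (List Bool → Bool) → MTree
  | .leaf x, _ => .leaf x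
  | .node l r, sel =>
    let lm := BTree.contract l (fun p => sel (false :: p))
    let rm := BTree.contract r (fun p => sel (true :: p))
    .node ((if sel [false] then lm.childrenOrSelf else [lm]) ++
           (if sel [true] then rm.childrenOrSelf else [rm]))

/-- A binary tree `t'` resolves the multifurcated tree `t`: contracting some set
of internal edges of `t'` yields a tree isomorphic to `t`. -/
def Resolves (t' : BTree) (t : MTree) : Prop :=
  ∃ sel : List Bool → Bool,
    (t'.contract sel).leafList.Perm t.leafList ∧
    (t'.contract sel).clusters = t.clusters

/-- The minimum possible size of an acyclic agreement forest over all
binary resolutions of the multifurcated trees `ms`. -/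
noncomputable def minResMaaf {ι : Type*} (ms : ι → MTree) (n : ℕ) : ℕ :=
  sInf {f | ∃ bs : ι → BTree, (∀ a, Resolves (bs a) (ms a)) ∧
      ∃ comp : Fin f → BTree, IsAAF bs n comp}

end OLA

namespace OLA

/-! ### Auxiliary lemmas for `stmt11` -/

namespace BTree

theorem leafList_ne_nil : ∀ t : BTree, t.leafList ≠ []
  | .leaf x => by simp [leafList]
  | .node l r => by simp [leafList, leafList_ne_nil l]

theorem mem_leafSet {t : BTree} {x : ℕ} : x ∈ t.leafSet ↔ x ∈ t.leafList := by
  simp [leafSet]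

theorem leafSet_nonempty (t : BTree) : t.leafSet.Nonempty := by
  cases h : t.leafList with
  | nil => exact absurd h (leafList_ne_nil t)
  | cons a l => exact ⟨a, by simp [mem_leafSet, h]⟩

theorem leafSet_node (l r : BTree) : (BTree.node l r).leafSet = l.leafSet ∪ r.leafSet := by
  ext x; simp [leafSet, leafList]

theorem minLeaf_mem : ∀ t : BTree, t.minLeaf ∈ t.leafSet
  | .leaf x => by simp [minLeaf, leafSet, leafList]
  | .node l r => by
      rw [leafSet_node, minLeaf]
      rcases min_cases l.minLeaf r.minLeaf with ⟨h, _⟩ | ⟨h, _⟩ <;> rw [h]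
      · exact Finset.mem_union_left _ (minLeaf_mem l)
      · exact Finset.mem_union_right _ (minLeaf_mem r)

theorem minLeaf_le : ∀ t : BTree, ∀ y ∈ t.leafSet, t.minLeaf ≤ y
  | .leaf x => by simp [minLeaf, leafSet, leafList]
  | .node l r => by
      intro y hy
      rw [leafSet_node] at hy
      rw [minLeaf]
      rcases Finset.mem_union.1 hy with h | h
      · exact le_trans (min_le_left _ _) (minLeaf_le l y h)
      · exact le_trans (min_le_right _ _) (minLeaf_le r y h)

theorem subtreeAt_nil (t : BTree) : t.subtreeAt [] = some t := by cases t <;> rfl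

theorem IsNode.refl (t : BTree) : t.IsNode t := ⟨[], subtreeAt_nil t⟩

theorem subtreeAt_append : ∀ (t : BTree) (p q : List Bool),
    t.subtreeAt (p ++ q) = (t.subtreeAt p).bind (fun u => u.subtreeAt q)
  | t, [], q => by rw [subtreeAt_nil, List.nil_append]; rfl
  | .leaf _, false :: _, _ => rfl
  | .leaf _, true :: _, _ => rfl
  | .node l _, false :: p, q => subtreeAt_append l p q
  | .node _ r, true :: p, q => subtreeAt_append r p q

theorem IsNode.trans {t w w' : BTree} (h1 : t.IsNode w) (h2 : w.IsNode w') : t.IsNode w' := by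
  obtain ⟨p, hp⟩ := h1; obtain ⟨q, hq⟩ := h2
  exact ⟨p ++ q, by rw [subtreeAt_append, hp]; exact hq⟩

theorem isNode_left (l r : BTree) : (BTree.node l r).IsNode l := ⟨[false], subtreeAt_nil l⟩
theorem isNode_right (l r : BTree) : (BTree.node l r).IsNode r := ⟨[true], subtreeAt_nil r⟩

theorem isNode_node_iff {l r w : BTree} :
    (BTree.node l r).IsNode w ↔ w = .node l r ∨ l.IsNode w ∨ r.IsNode w := by
  constructor
  · rintro ⟨p, hp⟩
    match p with
    | [] => exact Or.inl (Option.some.inj ((subtreeAt_nil _).symm.trans hp)).symm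
    | false :: p => exact Or.inr (Or.inl ⟨p, hp⟩)
    | true :: p => exact Or.inr (Or.inr ⟨p, hp⟩)
  · rintro (rfl | h | h)
    · exact IsNode.refl _
    · exact (isNode_left l r).trans h
    · exact (isNode_right l r).trans h

theorem isNode_leaf_iff {x : ℕ} {w : BTree} :
    (BTree.leaf x).IsNode w ↔ w = .leaf x := by
  constructor
  · rintro ⟨p, hp⟩
    match p with
    | [] => exact (Option.some.inj ((subtreeAt_nil _).symm.trans hp)).symm
    | false :: p => exact absurd hp (by simp [subtreeAt])
    | true :: p => exact absurd hp (by simp [subtreeAt])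
  · rintro rfl; exact IsNode.refl _

theorem IsNode.leafList_sublist {t w : BTree} (h : t.IsNode w) : List.Sublist w.leafList t.leafList := by
  induction t with
  | leaf x =>
    rw [isNode_leaf_iff] at h; subst h; exact List.Sublist.refl _
  | node l r ihl ihr =>
    rcases isNode_node_iff.1 h with rfl | h | h
    · exact List.Sublist.refl _
    · exact (ihl h).trans (List.sublist_append_left _ _)
    · exact (ihr h).trans (List.sublist_append_right _ _)

theorem IsNode.nodup {t w : BTree} (h : t.IsNode w) (hn : t.leafList.Nodup) :
    w.leafList.Nodup := h.leafList_sublist.nodup hn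

theorem IsNode.leafSet_subset {t w : BTree} (h : t.IsNode w) : w.leafSet ⊆ t.leafSet :=
  fun x hx => mem_leafSet.2 (h.leafList_sublist.subset (mem_leafSet.1 hx))

theorem mem_clusters_node {l r : BTree} {S : Set ℕ} :
    S ∈ (BTree.node l r).clusters ↔
      S = {y | y ∈ (BTree.node l r).leafList} ∨ S ∈ l.clusters ∨ S ∈ r.clusters := by
  rw [clusters]
  simp [Set.mem_insert_iff]

theorem mem_clusters_iff : ∀ {t : BTree} {S : Set ℕ},
    S ∈ t.clusters ↔ ∃ w, t.IsNode w ∧ S = {y | y ∈ w.leafList} := by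
  intro t
  induction t with
  | leaf x =>
    intro S
    constructor
    · intro h
      refine ⟨.leaf x, IsNode.refl _, ?_⟩
      have h' : S = {x} := h
      ext y; simp [h', leafList]
    · rintro ⟨w, hw, rfl⟩
      rw [isNode_leaf_iff] at hw; subst hw
      show _ = ({x} : Set ℕ)
      ext y; simp [leafList]
  | node l r ihl ihr =>
    intro S
    rw [mem_clusters_node]
    constructor
    · rintro (rfl | h | h)
      · exact ⟨.node l r, IsNode.refl _, rfl⟩
      · obtain ⟨w, hw, rfl⟩ := ihl.1 h
        exact ⟨w, (isNode_left l r).trans hw, rfl⟩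
      · obtain ⟨w, hw, rfl⟩ := ihr.1 h
        exact ⟨w, (isNode_right l r).trans hw, rfl⟩
    · rintro ⟨w, hw, rfl⟩
      rcases isNode_node_iff.1 hw with rfl | h | h
      · exact Or.inl rfl
      · exact Or.inr (Or.inl (ihl.2 ⟨w, h, rfl⟩))
      · exact Or.inr (Or.inr (ihr.2 ⟨w, h, rfl⟩))

theorem nodup_node_disjoint {l r : BTree} (hn : (BTree.node l r).leafList.Nodup) :
    Disjoint l.leafSet r.leafSet := by
  rw [show (BTree.node l r).leafList = l.leafList ++ r.leafList from rfl,
    List.nodup_append] at hn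
  rw [Finset.disjoint_left]
  intro x hx hx2
  exact hn.2.2 x (mem_leafSet.1 hx) x (mem_leafSet.1 hx2) rfl

theorem isNode_of_leafSet_subset : ∀ {t : BTree}, t.leafList.Nodup → ∀ {v w : BTree},
    t.IsNode v → t.IsNode w → w.leafSet ⊆ v.leafSet → v.IsNode w := by
  intro t
  induction t with
  | leaf x =>
    intro _ v w hv hw _
    rw [isNode_leaf_iff] at hv hw; subst hv; subst hw; exact IsNode.refl _
  | node l r ihl ihr =>
    intro hn v w hv hw hsub
    have hdisj : Disjoint l.leafSet r.leafSet := nodup_node_disjoint hn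
    have hnl : l.leafList.Nodup := (isNode_left l r).nodup hn
    have hnr : r.leafList.Nodup := (isNode_right l r).nodup hn
    have hwne := leafSet_nonempty w
    rcases isNode_node_iff.1 hv with rfl | hv' | hv'
    · exact hw
    · rcases isNode_node_iff.1 hw with rfl | hw' | hw'
      · exfalso
        obtain ⟨y, hy⟩ := leafSet_nonempty r
        have hyl : y ∈ l.leafSet := hv'.leafSet_subset
          (hsub (by rw [leafSet_node]; exact Finset.mem_union_right _ hy))
        exact Finset.disjoint_left.1 hdisj hyl hy
      · exact ihl hnl hv' hw' hsub
      · exfalso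
        obtain ⟨y, hy⟩ := hwne
        exact Finset.disjoint_left.1 hdisj (hv'.leafSet_subset (hsub hy))
          (hw'.leafSet_subset hy)
    · rcases isNode_node_iff.1 hw with rfl | hw' | hw'
      · exfalso
        obtain ⟨y, hy⟩ := leafSet_nonempty l
        have hyr : y ∈ r.leafSet := hv'.leafSet_subset
          (hsub (by rw [leafSet_node]; exact Finset.mem_union_left _ hy))
        exact Finset.disjoint_left.1 hdisj hy hyr
      · exfalso
        obtain ⟨y, hy⟩ := hwne
        exact Finset.disjoint_left.1 hdisj (hw'.leafSet_subset hy)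
          (hv'.leafSet_subset (hsub hy))
      · exact ihr hnr hv' hw' hsub

end BTree

namespace MTree

theorem mem_leafSet {t : MTree} {x : ℕ} : x ∈ t.leafSet ↔ x ∈ t.leafList := by
  simp [leafSet]

theorem leafList_node (cs : List MTree) :
    (MTree.node cs).leafList = cs.flatMap MTree.leafList := by
  rw [MTree.leafList, List.flatMap_def, List.flatMap_def, List.attach_map_val]

theorem mem_foldr_union {α : Type*} {x : α} : ∀ {L : List (Set α)},
    x ∈ L.foldr (· ∪ ·) ∅ ↔ ∃ C ∈ L, x ∈ C
  | [] => by simp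
  | C :: L => by simp [List.foldr_cons, mem_foldr_union]

theorem mem_clusters_node {cs : List MTree} {S : Set ℕ} :
    S ∈ (MTree.node cs).clusters ↔
      S = {y | y ∈ (MTree.node cs).leafList} ∨ ∃ c ∈ cs, S ∈ c.clusters := by
  rw [MTree.clusters]
  simp [Set.mem_insert_iff, mem_foldr_union]

theorem leafSet_mem_clusters : ∀ t : MTree, {y | y ∈ t.leafList} ∈ t.clusters
  | .leaf x => by
      have h : {y | y ∈ (MTree.leaf x).leafList} = ({x} : Set ℕ) := by
        ext y; simp [MTree.leafList]
      rw [MTree.clusters, h]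
      exact Set.mem_singleton _
  | .node cs => mem_clusters_node.2 (Or.inl rfl)

theorem Subtree.clusters_subset {s t : MTree} (h : MTree.Subtree s t) :
    s.clusters ⊆ t.clusters := by
  induction h with
  | refl => exact le_refl _
  | child hc _ ih => exact ih.trans (fun S hS => mem_clusters_node.2 (Or.inr ⟨_, hc, hS⟩))

theorem sublist_flatMap {α β : Type*} (f : α → List β) :
    ∀ {cs : List α} {c : α}, c ∈ cs → List.Sublist (f c) (cs.flatMap f) := by
  intro cs
  induction cs with
  | nil => intro c hc; simp at hc
  | cons a cs ih =>
    intro c hc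
    rcases List.mem_cons.1 hc with rfl | hc
    · rw [List.flatMap_cons]; exact List.sublist_append_left _ _
    · rw [List.flatMap_cons]; exact (ih hc).trans (List.sublist_append_right _ _)

theorem Subtree.leafList_sublist {s t : MTree} (h : MTree.Subtree s t) :
    List.Sublist s.leafList t.leafList := by
  induction h with
  | refl => exact List.Sublist.refl _
  | @child c cs hc _ ih =>
    refine ih.trans ?_
    rw [leafList_node]
    exact sublist_flatMap MTree.leafList hc

theorem minLeaf_spec {t : MTree} (h : t.leafList ≠ []) :
    t.minLeaf ∈ t.leafList ∧ ∀ y ∈ t.leafList, t.minLeaf ≤ y := by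
  rw [MTree.minLeaf]
  cases hm : t.leafList.min? with
  | none => exact absurd (List.min?_eq_none_iff.1 hm) h
  | some m =>
    have hspec := (List.min?_eq_some_iff).1 hm
    simpa using hspec

end MTree

theorem childrenOrSelf_flatMap_leafList (m : MTree) :
    m.childrenOrSelf.flatMap MTree.leafList = m.leafList := by
  cases m with
  | leaf x => simp [MTree.childrenOrSelf]
  | node cs => rw [MTree.childrenOrSelf, ← MTree.leafList_node]

theorem contract_leafList : ∀ (t : BTree) (sel : List Bool → Bool),
    (t.contract sel).leafList = t.leafList
  | .leaf x, sel => by simp [BTree.contract, MTree.leafList, BTree.leafList]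
  | .node l r, sel => by
    have h1 : ∀ (m : MTree) (b : Bool),
        ((if b then m.childrenOrSelf else [m]).flatMap MTree.leafList) = m.leafList := by
      intro m b; cases b
      · simp
      · exact childrenOrSelf_flatMap_leafList m
    rw [BTree.contract]
    rw [MTree.leafList_node, List.flatMap_append, h1, h1,
      contract_leafList l _, contract_leafList r _]
    rfl

theorem childrenOrSelf_clusters_subset {m c : MTree} (hc : c ∈ m.childrenOrSelf) :
    c.clusters ⊆ m.clusters := by
  cases m with
  | leaf x =>
    simp [MTree.childrenOrSelf] at hc; subst hc; exact le_refl _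
  | node cs => exact fun S hS => MTree.mem_clusters_node.2 (Or.inr ⟨c, hc, hS⟩)

theorem contract_clusters_subset : ∀ (t : BTree) (sel : List Bool → Bool),
    (t.contract sel).clusters ⊆ t.clusters
  | .leaf x, sel => by
    intro S hS
    simpa [BTree.contract, MTree.clusters, BTree.clusters] using hS
  | .node l r, sel => by
    intro S hS
    have hll := contract_leafList (BTree.node l r) sel
    rw [BTree.contract] at hS hll
    rcases MTree.mem_clusters_node.1 hS with h | ⟨c, hc, hS'⟩
    · rw [hll] at h
      exact BTree.mem_clusters_node.2 (Or.inl h)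
    · have hmem : S ∈ (l.contract fun p => sel (false :: p)).clusters ∨
          S ∈ (r.contract fun p => sel (true :: p)).clusters := by
        rcases List.mem_append.1 hc with hc | hc
        · left
          by_cases hb : sel [false]
          · rw [if_pos hb] at hc
            exact childrenOrSelf_clusters_subset hc hS'
          · rw [if_neg hb] at hc
            simp only [List.mem_singleton] at hc; subst hc; exact hS'
        · right
          by_cases hb : sel [true]
          · rw [if_pos hb] at hc
            exact childrenOrSelf_clusters_subset hc hS'
          · rw [if_neg hb] at hc
            simp only [List.mem_singleton] at hc; subst hc; exact hS'
      rcases hmem with h | h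
      · exact BTree.mem_clusters_node.2 (Or.inr (Or.inl (contract_clusters_subset l _ h)))
      · exact BTree.mem_clusters_node.2 (Or.inr (Or.inr (contract_clusters_subset r _ h)))

/-! ### The main combinatorial argument -/

/-- Packaging of the hypotheses for the main argument: the `U i` are pairwise
disjoint clusters of `t'` with minima `s i`. -/
structure Setup {p : ℕ} (U : Fin p → Finset ℕ) (s : Fin p → ℕ) (t' : BTree) : Prop where
  disj : ∀ i j, i ≠ j → Disjoint (U i) (U j)
  smem : ∀ i, s i ∈ U i
  sle : ∀ i, ∀ y ∈ U i, s i ≤ y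
  nd : t'.leafList.Nodup
  cl : ∀ i, ∃ wi, t'.IsNode wi ∧ wi.leafSet = U i

namespace Setup

variable {p : ℕ} {U : Fin p → Finset ℕ} {s : Fin p → ℕ} {t' : BTree}

theorem sne (h : Setup U s t') {i j : Fin p} (hij : i ≠ j) : s i ≠ s j := fun he =>
  Finset.disjoint_left.1 (h.disj i j hij) (h.smem i) (he ▸ h.smem j)

theorem subset_side (h : Setup U s t') {l r : BTree} (hn : t'.IsNode (.node l r))
    {i : Fin p} (hsub : U i ⊆ (BTree.node l r).leafSet)
    (hne : U i ≠ (BTree.node l r).leafSet) :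
    U i ⊆ l.leafSet ∨ U i ⊆ r.leafSet := by
  obtain ⟨wi, hwi, hwis⟩ := h.cl i
  have h2 : (BTree.node l r).IsNode wi :=
    BTree.isNode_of_leafSet_subset h.nd hn hwi (hwis ▸ hsub)
  rcases BTree.isNode_node_iff.1 h2 with rfl | hw | hw
  · exact absurd hwis.symm hne
  · exact Or.inl (hwis ▸ hw.leafSet_subset)
  · exact Or.inr (hwis ▸ hw.leafSet_subset)

theorem split (h : Setup U s t') {l r : BTree} (hn : t'.IsNode (.node l r))
    {A : Finset (Fin p)} (hA : (BTree.node l r).leafSet = A.biUnion U)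
    (hcard : ∃ i ∈ A, ∃ j ∈ A, i ≠ j) :
    l.leafSet = (A.filter fun i => U i ⊆ l.leafSet).biUnion U ∧
    r.leafSet = (A.filter fun i => U i ⊆ r.leafSet).biUnion U ∧
    (∀ i ∈ A, U i ⊆ l.leafSet ∨ U i ⊆ r.leafSet) := by
  have hnd' : (BTree.node l r).leafList.Nodup := hn.nodup h.nd
  have hdlr : Disjoint l.leafSet r.leafSet := BTree.nodup_node_disjoint hnd'
  have hne_full : ∀ i ∈ A, U i ≠ (BTree.node l r).leafSet := by
    intro i hi heq
    obtain ⟨a, ha, b, hb, hab⟩ := hcard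
    have hk : ∃ k ∈ A, k ≠ i := by
      rcases eq_or_ne a i with rfl | hne
      · exact ⟨b, hb, fun he => hab he.symm⟩
      · exact ⟨a, ha, hne⟩
    obtain ⟨k, hkA, hki⟩ := hk
    have hmem : s k ∈ U i := by
      rw [heq, hA]; exact Finset.mem_biUnion.2 ⟨k, hkA, h.smem k⟩
    exact Finset.disjoint_left.1 (h.disj k i hki) (h.smem k) hmem
  have hside : ∀ i ∈ A, U i ⊆ l.leafSet ∨ U i ⊆ r.leafSet := by
    intro i hi
    have hs : U i ⊆ (BTree.node l r).leafSet := by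
      rw [hA]; exact Finset.subset_biUnion_of_mem U hi
    exact h.subset_side hn hs (hne_full i hi)
  refine ⟨?_, ?_, hside⟩
  · apply Finset.Subset.antisymm
    · intro x hx
      have hx2 : x ∈ A.biUnion U := by
        rw [← hA, BTree.leafSet_node]; exact Finset.mem_union_left _ hx
      obtain ⟨i, hi, hxi⟩ := Finset.mem_biUnion.1 hx2
      rcases hside i hi with hU | hU
      · exact Finset.mem_biUnion.2 ⟨i, Finset.mem_filter.2 ⟨hi, hU⟩, hxi⟩
      · exact absurd (hU hxi) (Finset.disjoint_left.1 hdlr hx)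
    · intro x hx
      obtain ⟨i, hi, hxi⟩ := Finset.mem_biUnion.1 hx
      exact (Finset.mem_filter.1 hi).2 hxi
  · apply Finset.Subset.antisymm
    · intro x hx
      have hx2 : x ∈ A.biUnion U := by
        rw [← hA, BTree.leafSet_node]; exact Finset.mem_union_right _ hx
      obtain ⟨i, hi, hxi⟩ := Finset.mem_biUnion.1 hx2
      rcases hside i hi with hU | hU
      · exact absurd hx (Finset.disjoint_left.1 hdlr (hU hxi))
      · exact Finset.mem_biUnion.2 ⟨i, Finset.mem_filter.2 ⟨hi, hU⟩, hxi⟩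
    · intro x hx
      obtain ⟨i, hi, hxi⟩ := Finset.mem_biUnion.1 hx
      exact (Finset.mem_filter.1 hi).2 hxi

theorem min_of_biUnion (h : Setup U s t') {w : BTree} {A : Finset (Fin p)}
    (hw : w.leafSet = A.biUnion U) :
    ∃ i ∈ A, w.minLeaf = s i ∧ ∀ j ∈ A, s i ≤ s j := by
  have hm := BTree.minLeaf_mem w
  rw [hw] at hm
  obtain ⟨i, hi, hmi⟩ := Finset.mem_biUnion.1 hm
  have hsi : s i ∈ w.leafSet := by
    rw [hw]; exact Finset.mem_biUnion.2 ⟨i, hi, h.smem i⟩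
  have heq : w.minLeaf = s i :=
    le_antisymm (BTree.minLeaf_le w _ hsi) (h.sle i _ hmi)
  refine ⟨i, hi, heq, fun j hj => ?_⟩
  rw [← heq]
  exact BTree.minLeaf_le w _ (by rw [hw]; exact Finset.mem_biUnion.2 ⟨j, hj, h.smem j⟩)

theorem fwd (h : Setup U s t') {w : BTree} (hn : t'.IsNode w)
    {B : Finset (Fin p)} (hB : 2 ≤ B.card) (hw : w.leafSet = B.biUnion U) :
    ∃ i : Fin p, w.idx = -(s i : ℤ) ∧ ∃ j : Fin p, s j < s i := by
  obtain ⟨a, ha, b, hb, hab⟩ := Finset.one_lt_card.1 hB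
  cases w with
  | leaf x =>
    exfalso
    have h1 : s a ∈ (BTree.leaf x).leafSet := by
      rw [hw]; exact Finset.mem_biUnion.2 ⟨a, ha, h.smem a⟩
    have h2 : s b ∈ (BTree.leaf x).leafSet := by
      rw [hw]; exact Finset.mem_biUnion.2 ⟨b, hb, h.smem b⟩
    have e1 : s a = x := by simpa [BTree.leafSet, BTree.leafList] using h1
    have e2 : s b = x := by simpa [BTree.leafSet, BTree.leafList] using h2
    exact h.sne hab (e1.trans e2.symm)
  | node l r =>
    obtain ⟨hl, hr, hside⟩ := h.split hn hw ⟨a, ha, b, hb, hab⟩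
    have hnd' : (BTree.node l r).leafList.Nodup := hn.nodup h.nd
    have hdlr : Disjoint l.leafSet r.leafSet := BTree.nodup_node_disjoint hnd'
    obtain ⟨il, hil, hminl, hlbl⟩ := h.min_of_biUnion hl
    obtain ⟨ir, hir, hminr, hlbr⟩ := h.min_of_biUnion hr
    have hilU : U il ⊆ l.leafSet := (Finset.mem_filter.1 hil).2
    have hirU : U ir ⊆ r.leafSet := (Finset.mem_filter.1 hir).2
    have hilr : il ≠ ir := by
      rintro rfl
      exact Finset.disjoint_left.1 hdlr (hilU (h.smem il)) (hirU (h.smem il))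
    have hidx : (BTree.node l r).idx = -(max l.minLeaf r.minLeaf : ℤ) := rfl
    rcases lt_or_gt_of_ne (h.sne hilr) with hlt | hlt
    · refine ⟨ir, ?_, il, hlt⟩
      rw [hidx, hminl, hminr]; omega
    · refine ⟨il, ?_, ir, hlt⟩
      rw [hidx, hminl, hminr]; omega

theorem bwd (h : Setup U s t') : ∀ {w : BTree}, t'.IsNode w →
    ∀ {A : Finset (Fin p)}, w.leafSet = A.biUnion U →
    ∀ i ∈ A, ∀ j ∈ A, s j < s i →
    ∃ w', w.IsNode w' ∧ w'.idx = -(s i : ℤ) ∧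
      ∃ B : Finset (Fin p), 2 ≤ B.card ∧ w'.leafSet = B.biUnion U := by
  intro w
  induction w with
  | leaf x =>
    intro _ A hA i hi j hj hlt
    exfalso
    have hij : i ≠ j := fun he => absurd (he ▸ hlt) (lt_irrefl _)
    have h1 : s i ∈ (BTree.leaf x).leafSet := by
      rw [hA]; exact Finset.mem_biUnion.2 ⟨i, hi, h.smem i⟩
    have h2 : s j ∈ (BTree.leaf x).leafSet := by
      rw [hA]; exact Finset.mem_biUnion.2 ⟨j, hj, h.smem j⟩
    have e1 : s i = x := by simpa [BTree.leafSet, BTree.leafList] using h1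
    have e2 : s j = x := by simpa [BTree.leafSet, BTree.leafList] using h2
    exact h.sne hij (e1.trans e2.symm)
  | node l r ihl ihr =>
    intro hn A hA i hi j hj hlt
    have hij : i ≠ j := fun he => absurd (he ▸ hlt) (lt_irrefl _)
    obtain ⟨hl, hr, hside⟩ := h.split hn hA ⟨i, hi, j, hj, hij⟩
    have hcard : 2 ≤ A.card := Finset.one_lt_card.2 ⟨i, hi, j, hj, hij⟩
    have hnl : t'.IsNode l := hn.trans (BTree.isNode_left l r)
    have hnr : t'.IsNode r := hn.trans (BTree.isNode_right l r)
    have hidx : (BTree.node l r).idx = -(max l.minLeaf r.minLeaf : ℤ) := rfl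
    rcases hside i hi with hUi | hUi
    · by_cases hex : ∃ j' ∈ A.filter (fun k => U k ⊆ l.leafSet), s j' < s i
      · obtain ⟨j', hj', hlt'⟩ := hex
        obtain ⟨w', hw', rest⟩ :=
          ihl hnl hl i (Finset.mem_filter.2 ⟨hi, hUi⟩) j' hj' hlt'
        exact ⟨w', (BTree.isNode_left l r).trans hw', rest⟩
      · push_neg at hex
        obtain ⟨il, hil, hminl, hlbl⟩ := h.min_of_biUnion hl
        have hminl' : l.minLeaf = s i := by
          rw [hminl]
          exact le_antisymm (hlbl i (Finset.mem_filter.2 ⟨hi, hUi⟩)) (hex il hil)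
        have hjr : U j ⊆ r.leafSet := by
          rcases hside j hj with hUj | hUj
          · exact absurd hlt (not_lt.2 (hex j (Finset.mem_filter.2 ⟨hj, hUj⟩)))
          · exact hUj
        obtain ⟨ir, hir, hminr, hlbr⟩ := h.min_of_biUnion hr
        have hmr : r.minLeaf < s i := by
          rw [hminr]
          exact lt_of_le_of_lt (hlbr j (Finset.mem_filter.2 ⟨hj, hjr⟩)) hlt
        refine ⟨BTree.node l r, BTree.IsNode.refl _, ?_, A, hcard, hA⟩
        rw [hidx]; omega
    · by_cases hex : ∃ j' ∈ A.filter (fun k => U k ⊆ r.leafSet), s j' < s i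
      · obtain ⟨j', hj', hlt'⟩ := hex
        obtain ⟨w', hw', rest⟩ :=
          ihr hnr hr i (Finset.mem_filter.2 ⟨hi, hUi⟩) j' hj' hlt'
        exact ⟨w', (BTree.isNode_right l r).trans hw', rest⟩
      · push_neg at hex
        obtain ⟨ir, hir, hminr, hlbr⟩ := h.min_of_biUnion hr
        have hminr' : r.minLeaf = s i := by
          rw [hminr]
          exact le_antisymm (hlbr i (Finset.mem_filter.2 ⟨hi, hUi⟩)) (hex ir hir)
        have hjl : U j ⊆ l.leafSet := by
          rcases hside j hj with hUj | hUj
          · exact hUj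
          · exact absurd hlt (not_lt.2 (hex j (Finset.mem_filter.2 ⟨hj, hUj⟩)))
        obtain ⟨il, hil, hminl, hlbl⟩ := h.min_of_biUnion hl
        have hml : l.minLeaf < s i := by
          rw [hminl]
          exact lt_of_le_of_lt (hlbl j (Finset.mem_filter.2 ⟨hj, hjl⟩)) hlt
        refine ⟨BTree.node l r, BTree.IsNode.refl _, ?_, A, hcard, hA⟩
        rw [hidx]; omega

end Setup

theorem leafSet_node_eq_biUnion (cs : List MTree) :
    (MTree.node cs).leafSet =
      Finset.univ.biUnion (fun i : Fin cs.length => (cs.get i).leafSet) := by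
  ext x
  simp only [Finset.mem_biUnion, Finset.mem_univ, true_and, MTree.mem_leafSet,
    MTree.leafList_node, List.mem_flatMap]
  constructor
  · rintro ⟨c, hc, hx⟩
    obtain ⟨i, hi⟩ := List.mem_iff_get.1 hc
    exact ⟨i, hi ▸ hx⟩
  · rintro ⟨i, hx⟩
    exact ⟨cs.get i, List.get_mem cs i, hx⟩

end OLA

open OLA in
/-- Observation 1: for any binary resolution `t'` of a
multifurcated tree `T` and any multifurcated node of `T` with children
`u_1, …, u_p`, the internal nodes of the resolving subtree (the nodes of `t'`
whose cluster is a union of at least two of the children's clusters) are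
indexed exactly by `S = {-s_i : ∃ j, s_j < s_i}`, where `s_i` is the minimum
leaf index below `u_i`; in particular, the set is the same for any two
resolutions. -/
theorem stmt11 (n : ℕ) (T : MTree) (hT : T.IsPhyloM n)
    (t' : BTree) (ht' : t'.IsPhylo n) (hres : Resolves t' T)
    (cs : List MTree) (hsub : MTree.Subtree (.node cs) T) (hmulti : 3 ≤ cs.length) :
    {z : ℤ | ∃ w : BTree, t'.IsNode w ∧ w.idx = z ∧
        ∃ A : Finset (Fin cs.length), 2 ≤ A.card ∧
          w.leafSet = A.biUnion (fun i => (cs.get i).leafSet)} =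
    {z : ℤ | ∃ i : Fin cs.length, z = -((cs.get i).minLeaf : ℤ) ∧
        ∃ j : Fin cs.length, (cs.get j).minLeaf < (cs.get i).minLeaf} := by
  classical
  obtain ⟨sel, hperm, hclus⟩ := hres
  have hndcs : (MTree.node cs).leafList.Nodup := hsub.leafList_sublist.nodup hT.1
  have hclT : (MTree.node cs).clusters ⊆ t'.clusters := by
    intro S hS
    have h1 : S ∈ T.clusters := hsub.clusters_subset hS
    rw [← hclus] at h1
    exact contract_clusters_subset t' sel h1
  have hcl : ∀ i : Fin cs.length, ∃ wi, t'.IsNode wi ∧ wi.leafSet = (cs.get i).leafSet := by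
    intro i
    have hmem : {y | y ∈ (cs.get i).leafList} ∈ (MTree.node cs).clusters :=
      MTree.mem_clusters_node.2 (Or.inr ⟨cs.get i, List.get_mem cs i,
        MTree.leafSet_mem_clusters _⟩)
    obtain ⟨wi, hwi, hset⟩ := BTree.mem_clusters_iff.1 (hclT hmem)
    refine ⟨wi, hwi, ?_⟩
    ext x
    rw [BTree.mem_leafSet, MTree.mem_leafSet]
    exact (Set.ext_iff.1 hset x).symm
  have hUne : ∀ i : Fin cs.length, (cs.get i).leafList ≠ [] := by
    intro i h
    obtain ⟨wi, _, hset⟩ := hcl i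
    have hne := BTree.leafSet_nonempty wi
    rw [hset] at hne
    obtain ⟨x, hx⟩ := hne
    have := MTree.mem_leafSet.1 hx
    rw [h] at this
    simp at this
  have hspec := fun i : Fin cs.length => MTree.minLeaf_spec (hUne i)
  have hdisj : ∀ i j : Fin cs.length, i ≠ j →
      Disjoint (cs.get i).leafSet (cs.get j).leafSet := by
    intro i j hij
    have hnod : (cs.flatMap MTree.leafList).Nodup := by
      rw [← MTree.leafList_node]; exact hndcs
    have hpw := (List.nodup_flatMap.1 hnod).2
    rw [List.pairwise_iff_get] at hpw
    rw [Finset.disjoint_left]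
    intro x hx hx2
    rcases hij.lt_or_gt with hlt | hlt
    · exact (hpw i j hlt) (MTree.mem_leafSet.1 hx) (MTree.mem_leafSet.1 hx2)
    · exact (hpw j i hlt) (MTree.mem_leafSet.1 hx2) (MTree.mem_leafSet.1 hx)
  have hsetup : Setup (fun i : Fin cs.length => (cs.get i).leafSet)
      (fun i : Fin cs.length => (cs.get i).minLeaf) t' :=
    ⟨hdisj,
     fun i => MTree.mem_leafSet.2 (hspec i).1,
     fun i y hy => (hspec i).2 y (MTree.mem_leafSet.1 hy),
     ht'.1, hcl⟩
  have hfull : {y | y ∈ (MTree.node cs).leafList} ∈ (MTree.node cs).clusters :=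
    MTree.leafSet_mem_clusters _
  obtain ⟨v', hv', hvset⟩ := BTree.mem_clusters_iff.1 (hclT hfull)
  have hvset' : v'.leafSet =
      Finset.univ.biUnion (fun i : Fin cs.length => (cs.get i).leafSet) := by
    rw [← leafSet_node_eq_biUnion]
    ext x
    rw [BTree.mem_leafSet, MTree.mem_leafSet]
    exact (Set.ext_iff.1 hvset x).symm
  ext z
  simp only [Set.mem_setOf_eq]
  constructor
  · rintro ⟨w, hnw, hidx, A, hcard, hset⟩
    obtain ⟨i, hi, j, hj⟩ := hsetup.fwd hnw hcard hset
    exact ⟨i, hidx ▸ hi, j, hj⟩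
  · rintro ⟨i, rfl, j, hlt⟩
    obtain ⟨w', hw', hidx, B, hB, hBset⟩ :=
      hsetup.bwd hv' hvset' i (Finset.mem_univ i) j (Finset.mem_univ j) hlt
    exact ⟨w', hv'.trans hw', hidx, B, hB, hBset⟩
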